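/- Let K = [[Q, Aᵀ],[A, 0]] where Q is symmetric n×n, A is m×n with rank m ≥ 1, and ZᵀQZ is positive definite for a null-space basis Z of A. Then K is indefinite: it has both a positive and a negative eigenvalue (indeed, inertia(K) = (n, m, 0)). -/

import Mathlib

open Matrix

lemma aux_dp {p q : Type*} [Fintype p] [Fintype q] (N : Matrix p q ℝ) (w : q → ℝ) (y : p → ℝ) :
    (N *ᵥ w) ⬝ᵥ y = w ⬝ᵥ (Nᵀ *ᵥ y) := by
  rw [dotProduct_comm, dotProduct_mulVec, ← mulVec_transpose, dotProduct_comm]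

lemma aux_quad {p q : Type*} [Fintype p] [Fintype q] (N : Matrix p q ℝ) (M : Matrix p p ℝ)
    (w : q → ℝ) : (N *ᵥ w) ⬝ᵥ (M *ᵥ (N *ᵥ w)) = w ⬝ᵥ ((Nᵀ * M * N) *ᵥ w) := by
  rw [aux_dp, mulVec_mulVec, mulVec_mulVec, Matrix.mul_assoc]

lemma aux_congr_symm {p q : Type*} [Fintype p] [Fintype q] (M : Matrix p p ℝ) (hM : Mᵀ = M)
    (N : Matrix p q ℝ) : (Nᵀ * M * N)ᵀ = Nᵀ * M * N := by
  rw [transpose_mul, transpose_mul, transpose_transpose, hM, Matrix.mul_assoc]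

lemma aux_dot_self_nonneg {p : Type*} [Fintype p] (u : p → ℝ) : 0 ≤ u ⬝ᵥ u := by
  have h := dotProduct_self_star_nonneg u
  simpa only [star_trivial] using h

lemma aux_dot_self_pos {p : Type*} [Fintype p] (u : p → ℝ) (hu : u ≠ 0) : 0 < u ⬝ᵥ u :=
  lt_of_le_of_ne (aux_dot_self_nonneg u) (fun hh => hu (dotProduct_self_eq_zero.mp hh.symm))

lemma aux_tQ {p q r : Type*} [Fintype p] [Fintype q] [Fintype r] (M : Matrix p p ℝ)
    (hM : Mᵀ = M) (N1 : Matrix p q ℝ) (N2 : Matrix p r ℝ) :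
    (N1ᵀ * M * N2)ᵀ = N2ᵀ * M * N1 := by
  rw [transpose_mul, transpose_mul, transpose_transpose, hM, ← Matrix.mul_assoc]

lemma aux_inj {p q : Type*} [Fintype p] [Fintype q] (M : Matrix p q ℝ)
    (h : M.rank = Fintype.card q) : Function.Injective M.mulVecLin := by
  rw [← LinearMap.ker_eq_bot]
  have h2 := LinearMap.finrank_range_add_finrank_ker M.mulVecLin
  rw [Module.finrank_fintype_fun_eq_card] at h2
  have hr : Module.finrank ℝ (LinearMap.range M.mulVecLin) = M.rank := rfl
  have h0 : Module.finrank ℝ (LinearMap.ker M.mulVecLin) = 0 := by omega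
  exact Submodule.finrank_eq_zero.mp h0

noncomputable def sumElimL {M : Type*} [AddCommMonoid M] [Module ℝ M] {p q : Type*}
    (f : M →ₗ[ℝ] (p → ℝ)) (g : M →ₗ[ℝ] (q → ℝ)) : M →ₗ[ℝ] (p ⊕ q → ℝ) :=
  LinearMap.pi (fun i => Sum.rec (fun a => (LinearMap.proj a).comp f)
    (fun b => (LinearMap.proj b).comp g) i)

lemma sumElimL_apply {M : Type*} [AddCommMonoid M] [Module ℝ M] {p q : Type*}
    (f : M →ₗ[ℝ] (p → ℝ)) (g : M →ₗ[ℝ] (q → ℝ)) (x : M) :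
    sumElimL f g x = Sum.elim (f x) (g x) := funext fun i => by cases i <;> rfl

lemma spectral_subspace {ι : Type*} [Fintype ι] [DecidableEq ι] {K : Matrix ι ι ℝ}
    (hK : K.IsHermitian) (S : Finset ι) :
    ∃ P : Submodule ℝ (ι → ℝ), Module.finrank ℝ P = S.card ∧
      ∀ x ∈ P, x ≠ 0 → ∃ c : ι → ℝ, c ≠ 0 ∧ (∀ i ∉ S, c i = 0) ∧
        x ⬝ᵥ K *ᵥ x = ∑ i, hK.eigenvalues i * (c i)^2 := by
  set U : Matrix ι ι ℝ := (hK.eigenvectorUnitary : Matrix ι ι ℝ) with hUdef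
  have hU2 : U * star U = 1 := mem_unitaryGroup_iff.mp hK.eigenvectorUnitary.2
  have hU1 : star U * U = 1 := mem_unitaryGroup_iff'.mp hK.eigenvectorUnitary.2
  set f : ι → (ι → ℝ) := fun j => U *ᵥ Pi.single j 1 with hfdef
  have hli : LinearIndependent ℝ f := by
    have h0 : LinearIndependent ℝ (fun j : ι => (Pi.single j 1 : ι → ℝ)) := by
      have h := (Pi.basisFun ℝ ι).linearIndependent
      rwa [show ⇑(Pi.basisFun ℝ ι) = fun j : ι => (Pi.single j 1 : ι → ℝ) from
        funext fun j => Pi.basisFun_apply ℝ ι j] at h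
    have hinj : Function.Injective U.mulVecLin := by
      intro a b hab
      have := congrArg (fun y => (star U) *ᵥ y) hab
      simpa [mulVec_mulVec, hU1] using this
    exact h0.map' U.mulVecLin (LinearMap.ker_eq_bot.2 hinj)
  refine ⟨Submodule.span ℝ (f '' S), ?_, ?_⟩
  · have hli' : LinearIndependent ℝ (fun j : {j // j ∈ S} => f j) :=
      hli.comp _ Subtype.val_injective
    rw [Set.image_eq_range]
    exact (finrank_span_eq_card hli').trans (Fintype.card_coe S)
  · intro x hx hx0
    refine ⟨star U *ᵥ x, ?_, ?_, ?_⟩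
    · intro hc
      apply hx0
      have : U *ᵥ (star U *ᵥ x) = U *ᵥ 0 := by rw [hc]
      simpa [mulVec_mulVec, hU2] using this
    · intro i hi
      have hker : Submodule.span ℝ (f '' S) ≤
          LinearMap.ker ((LinearMap.proj i).comp ((star U).mulVecLin)) := by
        rw [Submodule.span_le]
        rintro y ⟨j, hj, rfl⟩
        have hji : j ≠ i := fun h => hi (h ▸ hj)
        simp only [SetLike.mem_coe, LinearMap.mem_ker, LinearMap.comp_apply, mulVecLin_apply,
          LinearMap.proj_apply, hfdef]
        rw [mulVec_mulVec, hU1, one_mulVec]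
        simp [Pi.single_apply, hji]
      exact hker hx
    · have hKx : K *ᵥ x = U *ᵥ (diagonal hK.eigenvalues *ᵥ (star U *ᵥ x)) := by
        conv_lhs => rw [hK.spectral_theorem]
        simp [mulVec_mulVec, Matrix.mul_assoc, hUdef]
      rw [hKx, dotProduct_mulVec (v := x), ← mulVec_transpose]
      have hsU : Uᵀ = star U := by
        rw [Matrix.star_eq_conjTranspose, conjTranspose_eq_transpose_of_trivial]
      rw [hsU, dotProduct]
      apply Finset.sum_congr rfl
      intro i _
      rw [mulVec_diagonal]
      ring

lemma aux_card_le {ι : Type*} [Fintype ι] (q : (ι → ℝ) → ℝ) (S₁ S₂ : Submodule ℝ (ι → ℝ))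
    (h₁ : ∀ x ∈ S₁, x ≠ 0 → 0 < q x) (h₂ : ∀ x ∈ S₂, x ≠ 0 → q x < 0) :
    Module.finrank ℝ S₁ + Module.finrank ℝ S₂ ≤ Fintype.card ι := by
  have hdisj : S₁ ⊓ S₂ = ⊥ := by
    rw [Submodule.eq_bot_iff]
    rintro x ⟨hx1, hx2⟩
    by_contra h0
    exact absurd (h₁ x hx1 h0) (not_lt.2 (le_of_lt (h₂ x hx2 h0)))
  have hsum := Submodule.finrank_sup_add_finrank_inf_eq S₁ S₂
  rw [hdisj, finrank_bot, add_zero] at hsum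
  rw [← hsum]
  exact le_trans (Submodule.finrank_le _) (le_of_eq (Module.finrank_fintype_fun_eq_card _))

set_option maxHeartbeats 2000000 in
theorem kkt_matrix_indefinite {n m : ℕ}
    (Q : Matrix (Fin n) (Fin n) ℝ) (A : Matrix (Fin m) (Fin n) ℝ)
    (Z : Matrix (Fin n) (Fin (n - m)) ℝ)
    (hQ : Q.IsSymm) (hA : A.rank = m) (hm : 1 ≤ m) (hZrank : Z.rank = n - m)
    (hAZ : A * Z = 0) (hZQZ : (Zᵀ * Q * Z).PosDef)
    (hK : (Matrix.fromBlocks Q Aᵀ A (0 : Matrix (Fin m) (Fin m) ℝ)).IsHermitian) :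
    (∃ i, 0 < hK.eigenvalues i) ∧ (∃ j, hK.eigenvalues j < 0) ∧
    (Finset.univ.filter (fun i => 0 < hK.eigenvalues i)).card = n ∧
    (Finset.univ.filter (fun i => hK.eigenvalues i < 0)).card = m ∧
    (Finset.univ.filter (fun i => hK.eigenvalues i = 0)).card = 0 := by
  classical
  have hcs : Fintype.card (Fin n ⊕ Fin m) = n + m := by simp
  have hmn : m ≤ n := hA ▸ A.rank_le_width
  set K : Matrix (Fin n ⊕ Fin m) (Fin n ⊕ Fin m) ℝ := fromBlocks Q Aᵀ A 0 with hKdef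
  have hQsymm : Qᵀ = Q := hQ
  -- quadratic form formula
  have hq : ∀ (v : Fin n → ℝ) (u : Fin m → ℝ),
      (Sum.elim v u) ⬝ᵥ (K *ᵥ Sum.elim v u) = v ⬝ᵥ (Q *ᵥ v) + 2 * (u ⬝ᵥ (A *ᵥ v)) := by
    intro v u
    rw [hKdef, fromBlocks_mulVec, sumElim_dotProduct_sumElim]
    simp only [Sum.elim_comp_inl, Sum.elim_comp_inr]
    rw [zero_mulVec, add_zero, dotProduct_add]
    have h1 : v ⬝ᵥ (Aᵀ *ᵥ u) = u ⬝ᵥ (A *ᵥ v) := by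
      rw [dotProduct_comm, aux_dp, transpose_transpose]
    rw [h1]; ring
  -- a right inverse Y of A
  obtain ⟨Y, hAY⟩ : ∃ Y : Matrix (Fin n) (Fin m) ℝ, A * Y = 1 := by
    have hBrank : (A * Aᵀ).rank = m := by rw [rank_self_mul_transpose, hA]
    have hBunit : IsUnit (A * Aᵀ) := by
      rw [← Matrix.mulVec_injective_iff_isUnit]
      exact aux_inj _ (by simpa using hBrank)
    exact ⟨Aᵀ * (A * Aᵀ)⁻¹, by
      rw [← Matrix.mul_assoc, Matrix.mul_nonsing_inv _ ((Matrix.isUnit_iff_isUnit_det _).mp hBunit)]⟩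
  have hAYv : ∀ u, A *ᵥ (Y *ᵥ u) = u := fun u => by
    rw [mulVec_mulVec, hAY, one_mulVec]
  set C : Matrix (Fin m) (Fin m) ℝ := Yᵀ * Q * Y with hCdef
  have hCsymm : Cᵀ = C := aux_congr_symm Q hQsymm Y
  -- positivity of reduced Hessian
  have hGpos : ∀ w : Fin (n - m) → ℝ, w ≠ 0 → 0 < w ⬝ᵥ ((Zᵀ * Q * Z) *ᵥ w) := by
    intro w hw
    simpa using hZQZ.dotProduct_mulVec_pos hw
  have hGnonneg : ∀ w : Fin (n - m) → ℝ, 0 ≤ w ⬝ᵥ ((Zᵀ * Q * Z) *ᵥ w) := by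
    intro w
    by_cases hw : w = 0
    · simp [hw]
    · exact le_of_lt (hGpos w hw)
  -- injectivity facts
  have hZinj : Function.Injective Z.mulVecLin := aux_inj Z (by simpa using hZrank)
  have hAtinj : Function.Injective Aᵀ.mulVecLin :=
    aux_inj Aᵀ (by rw [rank_transpose, hA]; simp)
  -- kernel of A equals range of Z
  have hrange : LinearMap.range Z.mulVecLin = LinearMap.ker A.mulVecLin := by
    apply Submodule.eq_of_le_of_finrank_le
    · rintro x ⟨w, rfl⟩
      rw [LinearMap.mem_ker, mulVecLin_apply, mulVecLin_apply, mulVec_mulVec, hAZ, zero_mulVec]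
    · have h2 := LinearMap.finrank_range_add_finrank_ker A.mulVecLin
      rw [Module.finrank_fintype_fun_eq_card, Fintype.card_fin] at h2
      have hra : Module.finrank ℝ (LinearMap.range A.mulVecLin) = m := hA
      have hrz : Module.finrank ℝ (LinearMap.range Z.mulVecLin) = n - m := hZrank
      omega
  -- K has trivial kernel
  have hKinj : ∀ x : Fin n ⊕ Fin m → ℝ, K *ᵥ x = 0 → x = 0 := by
    intro x hx
    set v : Fin n → ℝ := x ∘ Sum.inl with hvdef
    set u : Fin m → ℝ := x ∘ Sum.inr with hudef
    have hxe : x = Sum.elim v u := (Sum.elim_comp_inl_inr x).symm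
    rw [hxe, hKdef, fromBlocks_mulVec, zero_mulVec, add_zero] at hx
    have h1 : Q *ᵥ v + Aᵀ *ᵥ u = 0 := funext fun i => congrFun hx (Sum.inl i)
    have h2 : A *ᵥ v = 0 := funext fun i => congrFun hx (Sum.inr i)
    have hvQ : v ⬝ᵥ (Q *ᵥ v) = 0 := by
      have h3 : v ⬝ᵥ (Q *ᵥ v + Aᵀ *ᵥ u) = 0 := by rw [h1, dotProduct_zero]
      have h4 : v ⬝ᵥ (Aᵀ *ᵥ u) = 0 := by
        rw [dotProduct_comm, aux_dp, transpose_transpose, h2, dotProduct_zero]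
      rw [dotProduct_add, h4, add_zero] at h3
      exact h3
    have hv0 : v = 0 := by
      have hvk : v ∈ LinearMap.range Z.mulVecLin := by
        rw [hrange, LinearMap.mem_ker, mulVecLin_apply]; exact h2
      obtain ⟨w, hw⟩ := hvk
      rw [mulVecLin_apply] at hw
      have hw0 : w = 0 := by
        by_contra hww
        have := hGpos w hww
        rw [← aux_quad, hw, hvQ] at this
        exact lt_irrefl 0 this
      rw [← hw, hw0, mulVec_zero]
    have hu0 : u = 0 := by
      have : Aᵀ *ᵥ u = 0 := by
        rw [hv0, mulVec_zero, zero_add] at h1; exact h1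
      have h5 : Aᵀ.mulVecLin u = Aᵀ.mulVecLin 0 := by
        rw [mulVecLin_apply, mulVecLin_apply, mulVec_zero]; exact this
      exact hAtinj h5
    rw [hxe, hv0, hu0]
    funext i; cases i <;> rfl
  -- all eigenvalues are nonzero
  have hdet : K.det ≠ 0 := by
    intro h
    obtain ⟨v, hv0, hv⟩ := (Matrix.exists_mulVec_eq_zero_iff).mpr h
    exact hv0 (hKinj v hv)
  have heig : ∀ i, hK.eigenvalues i ≠ 0 := by
    intro i hi
    apply hdet
    rw [hK.det_eq_prod_eigenvalues]
    exact Finset.prod_eq_zero (Finset.mem_univ i) (by exact_mod_cast hi)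
  -- negative-definite subspace of dimension m
  set Lneg : (Fin m → ℝ) →ₗ[ℝ] (Fin n ⊕ Fin m → ℝ) :=
    sumElimL ((-Y).mulVecLin) ((1 + (2⁻¹ : ℝ) • C).mulVecLin) with hLnegdef
  have hLneg_apply : ∀ u, Lneg u = Sum.elim (-(Y *ᵥ u)) (u + (2⁻¹ : ℝ) • (C *ᵥ u)) := by
    intro u
    rw [hLnegdef, sumElimL_apply, mulVecLin_apply, mulVecLin_apply, neg_mulVec, add_mulVec,
      one_mulVec, smul_mulVec]
  have hLneg_inj : Function.Injective Lneg := by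
    rw [← LinearMap.ker_eq_bot, LinearMap.ker_eq_bot']
    intro u hu
    rw [hLneg_apply] at hu
    have h1 : -(Y *ᵥ u) = 0 := funext fun i => congrFun hu (Sum.inl i)
    have : Y *ᵥ u = 0 := by simpa [neg_eq_zero] using h1
    have := congrArg (fun z => A *ᵥ z) this
    simpa [hAYv] using this
  have hLneg_neg : ∀ u : Fin m → ℝ, u ≠ 0 → (Lneg u) ⬝ᵥ (K *ᵥ Lneg u) < 0 := by
    intro u hu
    rw [hLneg_apply, hq]
    have e1 : (-(Y *ᵥ u)) ⬝ᵥ (Q *ᵥ (-(Y *ᵥ u))) = u ⬝ᵥ (C *ᵥ u) := by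
      rw [mulVec_neg, dotProduct_neg, neg_dotProduct, neg_neg, aux_quad, hCdef]
    have e2 : A *ᵥ (-(Y *ᵥ u)) = -u := by rw [mulVec_neg, hAYv]
    have e3 : (C *ᵥ u) ⬝ᵥ u = u ⬝ᵥ (C *ᵥ u) := by rw [aux_dp, hCsymm]
    rw [e1, e2]
    have e4 : (u + (2⁻¹ : ℝ) • (C *ᵥ u)) ⬝ᵥ (-u) = -(u ⬝ᵥ u) - 2⁻¹ * (u ⬝ᵥ (C *ᵥ u)) := by
      rw [add_dotProduct, smul_dotProduct, dotProduct_neg, dotProduct_neg, dotProduct_comm u, e3]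
      simp only [smul_eq_mul]
      ring
    rw [e4]
    have hu2 : 0 < u ⬝ᵥ u := aux_dot_self_pos u hu
    ring_nf
    nlinarith [hu2]
  -- positive-definite subspace of dimension n
  set Lpos : (Fin (n - m) ⊕ Fin m → ℝ) →ₗ[ℝ] (Fin n ⊕ Fin m → ℝ) :=
    sumElimL ((fromCols Z Y).mulVecLin)
      ((fromCols (-(Yᵀ * Q * Z)) ((2⁻¹ : ℝ) • (1 + C) - C)).mulVecLin) with hLposdef
  have hLpos_apply : ∀ (w : Fin (n - m) → ℝ) (s : Fin m → ℝ),
      Lpos (Sum.elim w s) = Sum.elim (Z *ᵥ w + Y *ᵥ s)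
        (-((Yᵀ * Q * Z) *ᵥ w) + (((2⁻¹ : ℝ) • (1 + C)) *ᵥ s - C *ᵥ s)) := by
    intro w s
    rw [hLposdef, sumElimL_apply, mulVecLin_apply, mulVecLin_apply,
      fromCols_mulVec_sumElim, fromCols_mulVec_sumElim, neg_mulVec, sub_mulVec]
  have hLpos_inj : Function.Injective Lpos := by
    rw [← LinearMap.ker_eq_bot, LinearMap.ker_eq_bot']
    intro x hx
    set w : Fin (n - m) → ℝ := x ∘ Sum.inl with hwdef
    set s : Fin m → ℝ := x ∘ Sum.inr with hsdef
    have hxe : x = Sum.elim w s := (Sum.elim_comp_inl_inr x).symm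
    rw [hxe, hLpos_apply] at hx
    have h1 : Z *ᵥ w + Y *ᵥ s = 0 := funext fun i => congrFun hx (Sum.inl i)
    have hs0 : s = 0 := by
      have := congrArg (fun z => A *ᵥ z) h1
      simpa [mulVec_add, mulVec_mulVec, hAZ, hAYv] using this
    have hw0 : w = 0 := by
      rw [hs0, mulVec_zero, add_zero] at h1
      have h5 : Z.mulVecLin w = Z.mulVecLin 0 := by
        rw [mulVecLin_apply, mulVecLin_apply, mulVec_zero]; exact h1
      exact hZinj h5
    rw [hxe, hw0, hs0]
    funext i; cases i <;> rfl
  have hLpos_pos : ∀ x : Fin (n - m) ⊕ Fin m → ℝ, x ≠ 0 →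
      0 < (Lpos x) ⬝ᵥ (K *ᵥ Lpos x) := by
    intro x hx
    set w : Fin (n - m) → ℝ := x ∘ Sum.inl with hwdef
    set s : Fin m → ℝ := x ∘ Sum.inr with hsdef
    have hxe : x = Sum.elim w s := (Sum.elim_comp_inl_inr x).symm
    rw [hxe, hLpos_apply, hq]
    set v : Fin n → ℝ := Z *ᵥ w + Y *ᵥ s with hvdef
    have hAv : A *ᵥ v = s := by
      rw [hvdef, mulVec_add, mulVec_mulVec, hAZ, zero_mulVec, zero_add, hAYv]
    rw [hAv]
    set a : ℝ := w ⬝ᵥ ((Zᵀ * Q * Z) *ᵥ w) with hadef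
    set b : ℝ := w ⬝ᵥ ((Zᵀ * Q * Y) *ᵥ s) with hbdef
    set c : ℝ := s ⬝ᵥ (C *ᵥ s) with hcdef2
    set d : ℝ := s ⬝ᵥ s with hddef
    have hcross1 : (Z *ᵥ w) ⬝ᵥ (Q *ᵥ (Y *ᵥ s)) = b := by
      rw [hbdef, aux_dp, mulVec_mulVec, mulVec_mulVec, Matrix.mul_assoc]
    have hcross2 : (Y *ᵥ s) ⬝ᵥ (Q *ᵥ (Z *ᵥ w)) = b := by
      rw [aux_dp, mulVec_mulVec, mulVec_mulVec, dotProduct_comm, aux_dp,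
        aux_tQ Q hQsymm Y Z, hbdef]
    have hvQv : v ⬝ᵥ (Q *ᵥ v) = a + b + b + c := by
      rw [hvdef, mulVec_add, dotProduct_add, add_dotProduct, add_dotProduct]
      rw [aux_quad, ← hadef, hcross1, hcross2, aux_quad, ← hCdef, ← hcdef2]
      ring
    have hus : (-((Yᵀ * Q * Z) *ᵥ w) + (((2⁻¹ : ℝ) • (1 + C)) *ᵥ s - C *ᵥ s)) ⬝ᵥ s
        = -b + 2⁻¹ * (d + c) - c := by
      have t1 : ((Yᵀ * Q * Z) *ᵥ w) ⬝ᵥ s = b := by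
        rw [aux_dp, aux_tQ Q hQsymm Y Z, hbdef]
      have t3 : (C *ᵥ s) ⬝ᵥ s = c := by rw [aux_dp, hCsymm, hcdef2]
      have t2 : (((2⁻¹ : ℝ) • (1 + C)) *ᵥ s) ⬝ᵥ s = 2⁻¹ * (d + c) := by
        rw [smul_mulVec, smul_dotProduct, add_mulVec, one_mulVec, add_dotProduct, t3,
          smul_eq_mul, hddef]
      rw [add_dotProduct, sub_dotProduct, neg_dotProduct, t1, t2, t3]
      ring
    rw [hus]
    have hkey : a + b + b + c + 2 * (-b + 2⁻¹ * (d + c) - c) = a + d := by ring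
    have hwors : w ≠ 0 ∨ s ≠ 0 := by
      by_contra hcon
      push_neg at hcon
      apply hx
      rw [hxe, hcon.1, hcon.2]
      funext i; cases i <;> rfl
    have hvQv' : v ⬝ᵥ (Q *ᵥ v) + 2 * (-b + 2⁻¹ * (d + c) - c) = a + d := by
      rw [hvQv]; ring
    rw [hvQv']
    rcases hwors with hw | hs
    · have ha : 0 < a := hGpos w hw
      have hd : 0 ≤ d := aux_dot_self_nonneg s
      linarith
    · have hd : 0 < d := aux_dot_self_pos s hs
      have ha : 0 ≤ a := hGnonneg w
      linarith
  -- spectral subspaces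
  obtain ⟨Ppos, hPrank, hPprop⟩ :=
    spectral_subspace hK (Finset.univ.filter (fun i => 0 < hK.eigenvalues i))
  obtain ⟨Pneg, hNrank, hNprop⟩ :=
    spectral_subspace hK (Finset.univ.filter (fun i => hK.eigenvalues i < 0))
  have hPpos_pos : ∀ x ∈ Ppos, x ≠ 0 → 0 < x ⬝ᵥ (K *ᵥ x) := by
    intro x hx hx0
    obtain ⟨c, hc0, hcS, hsum⟩ := hPprop x hx hx0
    rw [hsum]
    obtain ⟨j, hj⟩ := Function.ne_iff.mp hc0
    have hjS : 0 < hK.eigenvalues j := by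
      by_contra hj'
      exact hj (hcS j (by simp [hj']))
    apply Finset.sum_pos'
    · intro i _
      by_cases hiS : 0 < hK.eigenvalues i
      · positivity
      · rw [hcS i (by simp [hiS])]
        simp
    · refine ⟨j, Finset.mem_univ j, ?_⟩
      have hcj2 : 0 < (c j)^2 :=
        lt_of_le_of_ne (sq_nonneg _) (Ne.symm (pow_ne_zero 2 hj))
      exact mul_pos hjS hcj2
  have hPneg_neg : ∀ x ∈ Pneg, x ≠ 0 → x ⬝ᵥ (K *ᵥ x) < 0 := by
    intro x hx hx0
    obtain ⟨c, hc0, hcS, hsum⟩ := hNprop x hx hx0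
    rw [hsum, ← neg_pos, ← Finset.sum_neg_distrib]
    obtain ⟨j, hj⟩ := Function.ne_iff.mp hc0
    have hjS : hK.eigenvalues j < 0 := by
      by_contra hj'
      exact hj (hcS j (by simp [not_lt.mp hj']))
    apply Finset.sum_pos'
    · intro i _
      by_cases hiS : hK.eigenvalues i < 0
      · have : hK.eigenvalues i * (c i)^2 ≤ 0 :=
          mul_nonpos_iff.mpr (Or.inr ⟨le_of_lt hiS, sq_nonneg _⟩)
        linarith
      · rw [hcS i (by simp [not_lt.mp (by simpa using hiS)])]
        simp
    · refine ⟨j, Finset.mem_univ j, ?_⟩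
      have hcj2 : 0 < (c j)^2 :=
        lt_of_le_of_ne (sq_nonneg _) (Ne.symm (pow_ne_zero 2 hj))
      have : hK.eigenvalues j * (c j)^2 < 0 := mul_neg_of_neg_of_pos hjS hcj2
      linarith
  -- dimension bounds
  have hnegprop : ∀ x ∈ LinearMap.range Lneg, x ≠ 0 → (fun x => x ⬝ᵥ (K *ᵥ x)) x < 0 := by
    rintro x ⟨u, rfl⟩ hx0
    exact hLneg_neg u (fun h => hx0 (by rw [h, map_zero]))
  have hposprop : ∀ x ∈ LinearMap.range Lpos, x ≠ 0 → 0 < (fun x => x ⬝ᵥ (K *ᵥ x)) x := by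
    rintro x ⟨u, rfl⟩ hx0
    exact hLpos_pos u (fun h => hx0 (by rw [h, map_zero]))
  have hcard1 : (Finset.univ.filter (fun i => 0 < hK.eigenvalues i)).card + m ≤ n + m := by
    have hb := aux_card_le (fun x => x ⬝ᵥ (K *ᵥ x)) Ppos (LinearMap.range Lneg)
      hPpos_pos hnegprop
    rw [hPrank] at hb
    have hr : Module.finrank ℝ (LinearMap.range Lneg) = m := by
      rw [LinearMap.finrank_range_of_inj hLneg_inj, Module.finrank_fintype_fun_eq_card,
        Fintype.card_fin]
    rw [hr, hcs] at hb
    exact hb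
  have hcard2 : n + (Finset.univ.filter (fun i => hK.eigenvalues i < 0)).card ≤ n + m := by
    have hb := aux_card_le (fun x => x ⬝ᵥ (K *ᵥ x)) (LinearMap.range Lpos) Pneg
      hposprop hPneg_neg
    rw [hNrank] at hb
    have hr : Module.finrank ℝ (LinearMap.range Lpos) = n := by
      rw [LinearMap.finrank_range_of_inj hLpos_inj, Module.finrank_fintype_fun_eq_card,
        Fintype.card_sum, Fintype.card_fin, Fintype.card_fin]
      omega
    rw [hr, hcs] at hb
    exact hb
  -- the zero-eigenvalue count
  have hzero : (Finset.univ.filter (fun i => hK.eigenvalues i = 0)).card = 0 := by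
    rw [Finset.card_eq_zero, Finset.filter_eq_empty_iff]
    intro i _
    exact heig i
  -- partition
  have hsplit := Finset.card_filter_add_card_filter_not
    (s := (Finset.univ : Finset (Fin n ⊕ Fin m))) (p := fun i => 0 < hK.eigenvalues i)
  have heqf : Finset.univ.filter (fun i => ¬ 0 < hK.eigenvalues i)
      = Finset.univ.filter (fun i => hK.eigenvalues i < 0) := by
    apply Finset.filter_congr
    intro i _
    simp only [not_lt]
    exact ⟨fun h => lt_of_le_of_ne h (heig i), fun h => le_of_lt h⟩
  rw [heqf, Finset.card_univ, Fintype.card_sum, Fintype.card_fin, Fintype.card_fin] at hsplit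
  have hPn : (Finset.univ.filter (fun i => 0 < hK.eigenvalues i)).card = n := by omega
  have hNm : (Finset.univ.filter (fun i => hK.eigenvalues i < 0)).card = m := by omega
  refine ⟨?_, ?_, hPn, hNm, hzero⟩
  · have : 0 < (Finset.univ.filter (fun i => 0 < hK.eigenvalues i)).card := by omega
    obtain ⟨i, hi⟩ := Finset.card_pos.mp this
    exact ⟨i, (Finset.mem_filter.mp hi).2⟩
  · have : 0 < (Finset.univ.filter (fun i => hK.eigenvalues i < 0)).card := by omega
    obtain ⟨i, hi⟩ := Finset.card_pos.mp this
    exact ⟨i, (Finset.mem_filter.mp hi).2⟩
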